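/- Let R be a commutative ring and B a commutative R-algebra that is free of rank d as an R-module with R-module basis b = (b₁, …, b_d). Then B is an étale R-algebra (formally étale and of finite presentation over R) if and only if the discriminant disc_R(b) is a unit of R. -/

import Mathlib

open Finset TensorProduct MvPolynomial



section
variable {d : ℕ} {R B : Type} [CommRing R] [CommRing B] [Algebra R B]

lemma finitePresentation_of_basis (b : Module.Basis (Fin d) R B) :
    Algebra.FinitePresentation R B := by
  classical
  let π : MvPolynomial (Fin d) R →ₐ[R] B := MvPolynomial.aeval (fun i => b i)
  -- linear section
  let s : B →ₗ[R] MvPolynomial (Fin d) R :=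
    { toFun := fun x => ∑ k, MvPolynomial.C (b.repr x k) * X k
      map_add' := by
        intro x y
        simp only [map_add, Finsupp.coe_add, Pi.add_apply, map_add, add_mul,
          Finset.sum_add_distrib]
      map_smul' := by
        intro r x
        simp only [map_smul, Finsupp.coe_smul, Pi.smul_apply, smul_eq_mul, map_mul,
          RingHom.id_apply, Finset.smul_sum, MvPolynomial.smul_eq_C_mul, mul_assoc] }
  have hs : ∀ x : B, s x = ∑ k, MvPolynomial.C (b.repr x k) * X k := fun _ => rfl
  have hπs : ∀ x, π (s x) = x := by
    intro x
    simp only [hs, map_sum, map_mul, MvPolynomial.aeval_X, π, MvPolynomial.algHom_C]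
    simp only [← Algebra.smul_def]
    exact b.sum_repr x
  let J : Ideal (MvPolynomial (Fin d) R) :=
    Ideal.span (insert (1 - s 1) (Set.range fun p : Fin d × Fin d => X p.1 * X p.2 - s (b p.1 * b p.2)))
  have hJfg : J.FG := Submodule.fg_span (Set.Finite.insert _ (Set.finite_range _))
  have hmem1 : (1 - s 1) ∈ J := Ideal.subset_span (Set.mem_insert _ _)
  have hmem2 : ∀ i j : Fin d, X i * X j - s (b i * b j) ∈ J := fun i j =>
    Ideal.subset_span (Set.mem_insert_iff.mpr (Or.inr ⟨(i, j), rfl⟩))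
  have key : ∀ p : MvPolynomial (Fin d) R, p - s (π p) ∈ J := by
    intro p
    induction p using MvPolynomial.induction_on with
    | C a =>
        have h1 : C a - s (π (C a)) = C a * (1 - s 1) := by
          rw [mul_sub, mul_one]
          congr 1
          have h2 : π (C a) = a • (1 : B) := by
            simp [π, MvPolynomial.algHom_C, Algebra.smul_def]
          rw [h2, map_smul, MvPolynomial.smul_eq_C_mul]
        rw [h1]
        exact Ideal.mul_mem_left _ _ hmem1
    | add p q hp hq =>
        have h1 : p + q - s (π (p + q)) = (p - s (π p)) + (q - s (π q)) := by
          rw [map_add, map_add]; ring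
        rw [h1]; exact Ideal.add_mem _ hp hq
    | mul_X p i hp =>
        have h1 : p * X i - s (π p) * X i ∈ J := by
          have := Ideal.mul_mem_right (X i) _ hp
          simpa [sub_mul] using this
        have h2 : s (π p) * X i - s (π (p * X i)) ∈ J := by
          have hexp : s (π p) * X i = ∑ k, C (b.repr (π p) k) * (X k * X i) := by
            simp only [hs, Finset.sum_mul, mul_assoc]
          have hexp2 : s (π (p * X i)) = ∑ k, C (b.repr (π p) k) * s (b k * b i) := by
            have h3 : π (p * X i) = ∑ k, b.repr (π p) k • (b k * b i) := by
              rw [map_mul]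
              have h4 : π (X i) = b i := by simp [π]
              rw [h4]
              conv_lhs => rw [← b.sum_repr (π p)]
              rw [Finset.sum_mul]
              exact Finset.sum_congr rfl fun k _ => smul_mul_assoc _ _ _
            rw [h3, map_sum]
            exact Finset.sum_congr rfl fun k _ => by
              rw [map_smul, MvPolynomial.smul_eq_C_mul]
          rw [hexp, hexp2, ← Finset.sum_sub_distrib]
          apply Ideal.sum_mem
          intro k _
          rw [← mul_sub]
          exact Ideal.mul_mem_left _ _ (hmem2 k i)
        have := Ideal.add_mem _ h1 h2
        simpa using this
  have hsurj : Function.Surjective π := fun x => ⟨s x, hπs x⟩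
  have hker : RingHom.ker π.toRingHom = J := by
    apply le_antisymm
    · intro p hp
      have hp0 : π p = 0 := hp
      have := key p
      rw [hp0, map_zero, sub_zero] at this
      exact this
    · rw [Ideal.span_le]
      rintro q (rfl | ⟨p, rfl⟩)
      · simp [RingHom.mem_ker, hπs]
      · simp [RingHom.mem_ker, hπs, π]
  exact Algebra.FinitePresentation.of_surjective hsurj (hker ▸ hJfg)

end


section
variable {d : ℕ} {R B : Type} [CommRing R] [CommRing B] [Algebra R B]

lemma trace_eq_sum_repr (b : Module.Basis (Fin d) R B) (x : B) :
    Algebra.trace R B x = ∑ i, b.repr (x * b i) i := by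
  rw [Algebra.trace_eq_matrix_trace b, Matrix.trace]
  simp [Matrix.diag, Algebra.leftMulMatrix_eq_repr_mul]

lemma isUnit_discr_of_sep (b : Module.Basis (Fin d) R B) (t : B ⊗[R] B)
    (ht1 : ∀ s : B, ((1 : B) ⊗ₜ[R] s - s ⊗ₜ[R] (1 : B)) * t = 0)
    (ht2 : Algebra.TensorProduct.lmul' R t = 1) :
    IsUnit (Algebra.discr R (⇑b)) := by
  classical
  obtain ⟨S, hS⟩ := TensorProduct.exists_finset t
  have ht1' : ∀ s : B, (s ⊗ₜ[R] (1:B)) * t = ((1:B) ⊗ₜ[R] s) * t := by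
    intro s
    have := ht1 s
    rw [sub_mul, sub_eq_zero] at this
    exact this.symm
  -- expanded form of the two key products
  have hmul_left : ∀ s : B, (s ⊗ₜ[R] (1:B)) * t = ∑ p ∈ S, (s * p.1) ⊗ₜ[R] p.2 := by
    intro s
    rw [hS, Finset.mul_sum]
    exact Finset.sum_congr rfl fun p _ => by
      rw [Algebra.TensorProduct.tmul_mul_tmul, one_mul]
  have hmul_right : ∀ s : B, ((1:B) ⊗ₜ[R] s) * t = ∑ p ∈ S, p.1 ⊗ₜ[R] (s * p.2) := by
    intro s
    rw [hS, Finset.mul_sum]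
    exact Finset.sum_congr rfl fun p _ => by
      rw [Algebra.TensorProduct.tmul_mul_tmul, one_mul]
  have hswap : ∀ s : B, ∑ p ∈ S, (s * p.1) ⊗ₜ[R] p.2 = ∑ p ∈ S, p.1 ⊗ₜ[R] (s * p.2) := by
    intro s
    rw [← hmul_left, ← hmul_right, ht1']
  have hsum1 : ∑ p ∈ S, p.1 * p.2 = 1 := by
    have := ht2
    rw [hS, map_sum] at this
    simpa using this
  -- the linear functional trick : apply (u ⊗ v ↦ φ u • v)
  have happly : ∀ (φ : B →ₗ[R] R) (s : B),
      ∑ p ∈ S, φ (s * p.1) • p.2 = ∑ p ∈ S, φ p.1 • (s * p.2) := by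
    intro φ s
    have := congrArg (TensorProduct.lift ((LinearMap.lsmul R B).comp φ)) (hswap s)
    simpa [map_sum] using this
  -- step 1 : ∑ trace(p.1) • p.2 = 1
  have step1 : ∑ p ∈ S, Algebra.trace R B p.1 • p.2 = 1 := by
    calc ∑ p ∈ S, Algebra.trace R B p.1 • p.2
        = ∑ p ∈ S, ∑ i, b.repr (p.1 * b i) i • p.2 := by
          refine Finset.sum_congr rfl fun p _ => ?_
          rw [trace_eq_sum_repr b, Finset.sum_smul]
      _ = ∑ i, ∑ p ∈ S, b.repr (b i * p.1) i • p.2 := by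
          rw [Finset.sum_comm]
          exact Finset.sum_congr rfl fun i _ => Finset.sum_congr rfl fun p _ => by
            rw [mul_comm]
      _ = ∑ i, ∑ p ∈ S, b.repr p.1 i • (b i * p.2) := by
          exact Finset.sum_congr rfl fun i _ => happly (b.coord i) (b i)
      _ = ∑ p ∈ S, (∑ i, b.repr p.1 i • b i) * p.2 := by
          rw [Finset.sum_comm]
          refine Finset.sum_congr rfl fun p _ => ?_
          rw [Finset.sum_mul]
          exact Finset.sum_congr rfl fun i _ => (smul_mul_assoc _ _ _).symm
      _ = ∑ p ∈ S, p.1 * p.2 := by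
          exact Finset.sum_congr rfl fun p _ => by rw [b.sum_repr]
      _ = 1 := hsum1
  -- step 2 : ∀ x, ∑ trace(x * p.1) • p.2 = x
  have step2 : ∀ x : B, ∑ p ∈ S, Algebra.trace R B (x * p.1) • p.2 = x := by
    intro x
    have := happly (Algebra.traceForm R B 1) x
    simp only [Algebra.traceForm_apply, one_mul] at this
    calc ∑ p ∈ S, Algebra.trace R B (x * p.1) • p.2
        = ∑ p ∈ S, Algebra.trace R B p.1 • (x * p.2) := this
      _ = x * ∑ p ∈ S, Algebra.trace R B p.1 • p.2 := by
          rw [Finset.mul_sum]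
          exact Finset.sum_congr rfl fun p _ => (mul_smul_comm _ _ _).symm
      _ = x := by rw [step1, mul_one]
  -- define the inverse matrix
  let A : Matrix (Fin d) (Fin d) R := fun i j => ∑ p ∈ S, b.repr p.2 i * b.repr p.1 j
  have hAT : A * Algebra.traceMatrix R ⇑b = 1 := by
    ext i j
    have hx : b.repr (b j) i = ∑ p ∈ S, Algebra.trace R B (b j * p.1) * b.repr p.2 i := by
      conv_lhs => rw [← step2 (b j)]
      rw [map_sum]
      simp only [map_smul, Finsupp.coe_smul, Finsupp.coe_finset_sum, Pi.smul_apply, smul_eq_mul,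
        Finset.sum_apply]
    calc (A * Algebra.traceMatrix R ⇑b) i j
        = ∑ k, (∑ p ∈ S, b.repr p.2 i * b.repr p.1 k) * Algebra.trace R B (b k * b j) := by
          rw [Matrix.mul_apply]
          simp [Matrix.mul_apply, A, Algebra.traceMatrix_apply, Algebra.traceForm_apply]
      _ = ∑ p ∈ S, b.repr p.2 i * ∑ k, b.repr p.1 k * Algebra.trace R B (b k * b j) := by
          simp only [Finset.sum_mul, Finset.mul_sum]
          rw [Finset.sum_comm]
          exact Finset.sum_congr rfl fun p _ => Finset.sum_congr rfl fun k _ => by ring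
      _ = ∑ p ∈ S, b.repr p.2 i * Algebra.trace R B (p.1 * b j) := by
          refine Finset.sum_congr rfl fun p _ => ?_
          congr 1
          calc ∑ k, b.repr p.1 k * Algebra.trace R B (b k * b j)
              = Algebra.trace R B ((∑ k, b.repr p.1 k • b k) * b j) := by
                rw [Finset.sum_mul, map_sum]
                exact Finset.sum_congr rfl fun k _ => by
                  rw [smul_mul_assoc, map_smul, smul_eq_mul]
            _ = Algebra.trace R B (p.1 * b j) := by rw [b.sum_repr]
      _ = b.repr (b j) i := by
          rw [hx]
          exact Finset.sum_congr rfl fun p _ => by rw [mul_comm (b j) p.1]; ring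
      _ = (1 : Matrix (Fin d) (Fin d) R) i j := by
          rw [b.repr_self]
          simp [Matrix.one_apply, Finsupp.single_apply, eq_comm]
  have hdet : A.det * (Algebra.traceMatrix R ⇑b).det = 1 := by
    rw [← Matrix.det_mul, hAT, Matrix.det_one]
  rw [Algebra.discr_def]
  exact IsUnit.of_mul_eq_one _ (by rw [mul_comm] at hdet; exact hdet)

end


section
variable {d : ℕ} {R B : Type} [CommRing R] [CommRing B] [Algebra R B]


section dual
variable (b : Module.Basis (Fin d) R B) (hu : IsUnit (Algebra.discr R (⇑b)))

/-- the trace-dual family -/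
noncomputable def tdual (b : Module.Basis (Fin d) R B) : Fin d → B :=
  fun j => ∑ k, (Algebra.traceMatrix R ⇑b)⁻¹ k j • b k

include hu in
lemma trace_mul_tdual (i j : Fin d) :
    Algebra.trace R B (b i * tdual b j) = (1 : Matrix (Fin d) (Fin d) R) i j := by
  classical
  have hdet : IsUnit (Algebra.traceMatrix R ⇑b).det := by
    rwa [Algebra.discr_def] at hu
  rw [tdual]
  rw [Finset.mul_sum, map_sum]
  have : ∀ k, Algebra.trace R B (b i * (Algebra.traceMatrix R ⇑b)⁻¹ k j • b k)
      = Algebra.traceMatrix R ⇑b i k * (Algebra.traceMatrix R ⇑b)⁻¹ k j := by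
    intro k
    rw [mul_smul_comm, map_smul, smul_eq_mul, mul_comm,
      Algebra.traceMatrix_apply, Algebra.traceForm_apply]
  simp only [this]
  rw [← Matrix.mul_apply, Matrix.mul_nonsing_inv _ hdet]

include hu in
lemma repr_eq_trace_mul_tdual (x : B) (i : Fin d) :
    b.repr x i = Algebra.trace R B (x * tdual b i) := by
  classical
  have : (b.coord i : B →ₗ[R] R)
      = (Algebra.trace R B).comp (LinearMap.mulRight R (tdual b i)) := by
    refine b.ext fun j => ?_
    simp only [Module.Basis.coord_apply, LinearMap.coe_comp, Function.comp_apply,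
      LinearMap.mulRight_apply, b.repr_self]
    rw [trace_mul_tdual b hu]
    simp [Matrix.one_apply, Finsupp.single_apply]
  have := congrArg (fun f : B →ₗ[R] R => f x) this
  simpa using this

include hu in
lemma expansion1 (x : B) : ∑ i, Algebra.trace R B (x * tdual b i) • b i = x := by
  conv_rhs => rw [← b.sum_repr x]
  exact Finset.sum_congr rfl fun i _ => by rw [repr_eq_trace_mul_tdual b hu]

include hu in
lemma expansion2 (x : B) : ∑ i, Algebra.trace R B (x * b i) • tdual b i = x := by
  classical
  have hdet : IsUnit (Algebra.traceMatrix R ⇑b).det := by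
    rwa [Algebra.discr_def] at hu
  -- check equality of linear maps on the basis
  have key : ∀ j, ∑ i, Algebra.trace R B (b j * b i) • tdual b i = b j := by
    intro j
    simp only [tdual, Finset.smul_sum, smul_smul]
    rw [Finset.sum_comm]
    have : ∀ k, ∑ i, (Algebra.trace R B (b j * b i) * (Algebra.traceMatrix R ⇑b)⁻¹ k i) • b k
        = ((Algebra.traceMatrix R ⇑b)⁻¹ * Algebra.traceMatrix R ⇑b) k j • b k := by
      intro k
      rw [← Finset.sum_smul, Matrix.mul_apply]
      congr 1
      exact Finset.sum_congr rfl fun i _ => by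
        rw [Algebra.traceMatrix_apply, Algebra.traceForm_apply, mul_comm (b i) (b j)]
        ring
    simp only [this, Matrix.nonsing_inv_mul _ hdet]
    rw [Finset.sum_eq_single j]
    · simp [Matrix.one_apply]
    · intro k _ hk; simp [Matrix.one_apply, hk]
    · intro h; exact absurd (Finset.mem_univ j) h
  -- now for general x by linearity
  conv_rhs => rw [← b.sum_repr x]
  calc ∑ i, Algebra.trace R B (x * b i) • tdual b i
      = ∑ i, Algebra.trace R B ((∑ j, b.repr x j • b j) * b i) • tdual b i := by
        rw [b.sum_repr x]
    _ = ∑ j, b.repr x j • (∑ i, Algebra.trace R B (b j * b i) • tdual b i) := by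
        simp only [Finset.sum_mul, map_sum, smul_mul_assoc, map_smul, Finset.sum_smul,
          smul_eq_mul, Finset.smul_sum, smul_smul]
        rw [Finset.sum_comm]
    _ = ∑ j, b.repr x j • b j := by
        exact Finset.sum_congr rfl fun j _ => by rw [key j]

include hu in
lemma sum_mul_tdual_eq_one : ∑ i, b i * tdual b i = 1 := by
  classical
  -- it suffices to test against traces
  have htr : ∀ j, Algebra.trace R B ((∑ i, b i * tdual b i) * b j)
      = Algebra.trace R B ((1:B) * b j) := by
    intro j
    rw [Finset.sum_mul, map_sum, one_mul]
    calc ∑ i, Algebra.trace R B (b i * tdual b i * b j)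
        = ∑ i, b.repr (b j * b i) i := by
          refine Finset.sum_congr rfl fun i _ => ?_
          rw [repr_eq_trace_mul_tdual b hu]
          congr 1
          ring
      _ = Algebra.trace R B (b j) := (trace_eq_sum_repr b (b j)).symm
  have h1 : ∀ (x y : B), (∀ j, Algebra.trace R B (x * b j) = Algebra.trace R B (y * b j)) → x = y := by
    intro x y h
    rw [← expansion2 b hu x, ← expansion2 b hu y]
    exact Finset.sum_congr rfl fun j _ => by rw [h j]
  exact h1 _ _ htr

include hu in
lemma sep_swap (s : B) :
    ∑ i, (s * b i) ⊗ₜ[R] tdual b i = ∑ i, b i ⊗ₜ[R] (s * tdual b i) := by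
  classical
  calc ∑ i, (s * b i) ⊗ₜ[R] tdual b i
      = ∑ i, (∑ j, Algebra.trace R B (s * b i * tdual b j) • b j) ⊗ₜ[R] tdual b i := by
        exact Finset.sum_congr rfl fun i _ => by rw [expansion1 b hu (s * b i)]
    _ = ∑ i, ∑ j, Algebra.trace R B (s * b i * tdual b j) • (b j ⊗ₜ[R] tdual b i) := by
        refine Finset.sum_congr rfl fun i _ => ?_
        rw [TensorProduct.sum_tmul]
        exact Finset.sum_congr rfl fun j _ => by rw [TensorProduct.smul_tmul']
    _ = ∑ i, ∑ j, Algebra.trace R B (s * b j * tdual b i) • (b i ⊗ₜ[R] tdual b j) := by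
        rw [Finset.sum_comm]
    _ = ∑ i, b i ⊗ₜ[R] (s * tdual b i) := by
        refine Finset.sum_congr rfl fun i _ => ?_
        conv_rhs => rw [show s * tdual b i
          = ∑ j, Algebra.trace R B (s * tdual b i * b j) • tdual b j from
            (expansion2 b hu (s * tdual b i)).symm]
        rw [TensorProduct.tmul_sum]
        exact Finset.sum_congr rfl fun j _ => by
          rw [TensorProduct.tmul_smul]
          congr 2
          ring

include hu in
lemma formallyUnramified_of_isUnit_discr : Algebra.FormallyUnramified R B := by
  classical
  have : Module.Finite R B := Module.Finite.of_basis b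
  have : Algebra.FiniteType R B := inferInstance
  rw [Algebra.FormallyUnramified.iff_exists_tensorProduct]
  refine ⟨∑ i, b i ⊗ₜ[R] tdual b i, fun s => ?_, ?_⟩
  · rw [sub_mul, sub_eq_zero]
    calc ((1:B) ⊗ₜ[R] s) * ∑ i, b i ⊗ₜ[R] tdual b i
        = ∑ i, b i ⊗ₜ[R] (s * tdual b i) := by
          rw [Finset.mul_sum]
          exact Finset.sum_congr rfl fun i _ => by
            rw [Algebra.TensorProduct.tmul_mul_tmul, one_mul]
      _ = ∑ i, (s * b i) ⊗ₜ[R] tdual b i := (sep_swap b hu s).symm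
      _ = (s ⊗ₜ[R] (1:B)) * ∑ i, b i ⊗ₜ[R] tdual b i := by
          rw [Finset.mul_sum]
          exact Finset.sum_congr rfl fun i _ => by
            rw [Algebra.TensorProduct.tmul_mul_tmul, one_mul]
  · rw [map_sum]
    calc ∑ i, Algebra.TensorProduct.lmul' R (b i ⊗ₜ[R] tdual b i)
        = ∑ i, b i * tdual b i := by
          exact Finset.sum_congr rfl fun i _ => by
            rw [Algebra.TensorProduct.lmul'_apply_tmul]
      _ = 1 := sum_mul_tdual_eq_one b hu

end dual
end


section
variable {d : ℕ} {R B : Type} [CommRing R] [CommRing B] [Algebra R B]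

lemma formallySmooth_of_sep (b : Module.Basis (Fin d) R B) (c : Fin d → B)
    (hc1 : ∑ i, b i * c i = 1)
    (hc2 : ∀ s : B, ∑ i, (s * b i) ⊗ₜ[R] c i = ∑ i, b i ⊗ₜ[R] (s * c i)) :
    Algebra.FormallySmooth R B := by
  apply Algebra.FormallySmooth.of_comp_surjective
  intro C _ _ I hI f
  classical
  have hII : ∀ m n : C, m ∈ I → n ∈ I → m * n = 0 := by
    intro m n hm hn
    have h : m * n ∈ I * I := Ideal.mul_mem_mul hm hn
    rw [← pow_two, hI] at h
    simpa using h
  -- an R-linear lift of f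
  let g : B →ₗ[R] C := b.constr R fun i =>
    Function.surjInv Ideal.Quotient.mk_surjective (f (b i))
  have hg : ∀ x, Ideal.Quotient.mk I (g x) = f x := by
    intro x
    have h : (Ideal.Quotient.mkₐ R I).toLinearMap.comp g = f.toLinearMap := by
      refine b.ext fun i => ?_
      simp only [LinearMap.coe_comp, Function.comp_apply, AlgHom.toLinearMap_apply,
        Ideal.Quotient.mkₐ_eq_mk, g, Module.Basis.constr_basis]
      exact Function.surjInv_eq Ideal.Quotient.mk_surjective (f (b i))
    have := congrArg (fun ψ : B →ₗ[R] C ⧸ I => ψ x) h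
    simpa using this
  -- the Hochschild 2-cocycle
  let D : B → B → C := fun x y => g (x * y) - g x * g y
  have hD : ∀ x y, D x y = g (x * y) - g x * g y := fun _ _ => rfl
  have hDI : ∀ x y, D x y ∈ I := by
    intro x y
    rw [← Ideal.Quotient.eq_zero_iff_mem]
    simp only [hD, map_sub, map_mul, hg, sub_self]
  -- cocycle identity
  have L0 : ∀ u v w : B, g u * D v w = D (u * v) w + g w * D u v - D u (v * w) := by
    intro u v w
    simp only [hD, mul_assoc]
    ring
  -- sum collapsing using hc1
  have hDsum : ∀ a w : B, (∑ i, D (a * (b i * c i)) w) = D a w := by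
    intro a w
    simp only [hD]
    rw [Finset.sum_sub_distrib, ← Finset.sum_mul, ← map_sum, ← map_sum]
    have e1 : ∑ i, a * (b i * c i) * w = a * w := by
      rw [← Finset.sum_mul, ← Finset.mul_sum, hc1, mul_one]
    have e2 : ∑ i, a * (b i * c i) = a := by
      rw [← Finset.mul_sum, hc1, mul_one]
    rw [e1, e2]
  have hDsum1 : ∀ a : B, (∑ i, D (b i * c i) a) = D 1 a := by
    intro a
    simp only [hD]
    rw [Finset.sum_sub_distrib, ← Finset.sum_mul, ← map_sum, ← map_sum]
    have e1 : ∑ i, b i * c i * a = 1 * a := by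
      rw [← Finset.sum_mul, hc1]
    rw [e1, hc1]
  -- applying a bilinear map to hc2
  have L1 : ∀ a w : B, (∑ i, g (a * b i) * D (c i) w) = ∑ i, g (b i) * D (a * c i) w := by
    intro a w
    let Λ : B →ₗ[R] B →ₗ[R] C := LinearMap.mk₂ R (fun u v => g u * (g (v * w) - g v * g w))
      (by intro u u' v; rw [map_add, add_mul])
      (by intro r u v; rw [map_smul, smul_mul_assoc])
      (by intro u v v'; rw [add_mul, map_add, map_add]; ring)
      (by intro r u v
          rw [smul_mul_assoc, map_smul, map_smul, smul_mul_assoc, ← smul_sub, mul_smul_comm])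
    have := congrArg (TensorProduct.lift Λ) (hc2 a)
    simpa only [map_sum, TensorProduct.lift.tmul, LinearMap.mk₂_apply, hD, Λ] using this
  -- φ, G, E
  let φ : B → C := fun a => ∑ i, g (b i) * D (c i) a
  have hφ : ∀ a, φ a = ∑ i, g (b i) * D (c i) a := fun _ => rfl
  have hφI : ∀ a, φ a ∈ I := fun a =>
    Ideal.sum_mem _ fun i _ => Ideal.mul_mem_left _ _ (hDI _ _)
  let G : B → C := fun a => ∑ i, D (b i) (a * c i)
  have hG : ∀ a, G a = ∑ i, D (b i) (a * c i) := fun _ => rfl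
  let E : C := ∑ i, D (b i) (c i)
  have hEI : E ∈ I := Ideal.sum_mem _ fun i _ => hDI _ _
  have h1I : (1 : C) - g 1 ∈ I := by
    rw [← Ideal.Quotient.eq_zero_iff_mem, map_sub, map_one, hg, map_one, sub_self]
  -- L2
  have L2 : ∀ a w : B, g a * φ w = ∑ i, g (b i) * D (a * c i) w := by
    intro a w
    rw [hφ, Finset.mul_sum, ← L1 a w]
    refine Finset.sum_congr rfl fun i _ => ?_
    have hz : D a (b i) * D (c i) w = 0 := hII _ _ (hDI _ _) (hDI _ _)
    have : g (a * b i) = g a * g (b i) + D a (b i) := by rw [hD]; ring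
    rw [this, add_mul, hz, add_zero, mul_assoc]
  -- L3
  have L3 : ∀ a w : B, (∑ i, g (b i) * D (a * c i) w) = D a w + g w * G a - G (a * w) := by
    intro a w
    have e : ∀ i : Fin d, g (b i) * D (a * c i) w
        = D (a * (b i * c i)) w + g w * D (b i) (a * c i) - D (b i) ((a * w) * c i) := by
      intro i
      rw [L0 (b i) (a * c i) w, show b i * (a * c i) = a * (b i * c i) by ring,
        show a * c i * w = a * w * c i by ring]
    simp only [e]
    rw [Finset.sum_sub_distrib, Finset.sum_add_distrib, hDsum, ← Finset.mul_sum, ← hG, ← hG]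
  -- L4 : G in terms of φ
  have L4 : ∀ a : B, G a = g a - g 1 * g a + g a * E - φ a := by
    intro a
    have e : ∀ i : Fin d, g (b i) * D (c i) a
        = D (b i * c i) a + g a * D (b i) (c i) - D (b i) (a * c i) := by
      intro i
      rw [L0 (b i) (c i) a, show c i * a = a * c i by ring]
    have : φ a = D 1 a + g a * E - G a := by
      rw [hφ]
      simp only [e]
      rw [Finset.sum_sub_distrib, Finset.sum_add_distrib, hDsum1, ← Finset.mul_sum, ← hG]
    have hD1 : D 1 a = g a - g 1 * g a := by rw [hD, one_mul]
    rw [hD1] at this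
    rw [this]
    ring
  -- the key identity
  have star : ∀ a w : B, g a * φ w + g w * φ a - φ (a * w) = D a w := by
    intro a w
    have e1 : g a * φ w = D a w + g w * G a - G (a * w) := (L2 a w).trans (L3 a w)
    have z1 : D a w * E = 0 := hII _ _ (hDI _ _) hEI
    have z2 : ((1 : C) - g 1) * D a w = 0 := hII _ _ h1I (hDI _ _)
    have hgaw : g (a * w) = g a * g w + D a w := by rw [hD]; ring
    rw [e1, L4 a, L4 (a * w), hgaw]
    linear_combination (-1 : C) * z1 + (-1 : C) * z2
  -- the corrected linear lift is multiplicative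
  have hmul : ∀ x y : B, g (x * y) + φ (x * y) = (g x + φ x) * (g y + φ y) := by
    intro x y
    have hz : φ x * φ y = 0 := hII _ _ (hφI x) (hφI y)
    have hgxy : g (x * y) = g x * g y + D x y := by rw [hD]; ring
    linear_combination hgxy - star x y - hz
  have hone : g 1 + φ 1 = 1 := by
    have hm : (g 1 + φ 1) - 1 ∈ I := by
      rw [← Ideal.Quotient.eq_zero_iff_mem]
      rw [map_sub, map_add, hg, Ideal.Quotient.eq_zero_iff_mem.mpr (hφI 1),
        add_zero, map_one, map_one, sub_self]
    have hmm : ((g 1 + φ 1) - 1) * ((g 1 + φ 1) - 1) = 0 := hII _ _ hm hm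
    have hsq : g 1 + φ 1 = (g 1 + φ 1) * (g 1 + φ 1) := by
      have := hmul 1 1
      rwa [mul_one] at this
    linear_combination (-1 : C) * hmm + (-1 : C) * hsq
  -- package as a linear map
  let φlin : B →ₗ[R] C := ∑ i : Fin d, (LinearMap.mulLeft R (g (b i))).comp
    (g.comp (LinearMap.mulLeft R (c i)) - (LinearMap.mulLeft R (g (c i))).comp g)
  have hφlin : ∀ x, φlin x = φ x := by
    intro x
    simp only [φlin, LinearMap.sum_apply, LinearMap.coe_comp, Function.comp_apply,
      LinearMap.sub_apply, LinearMap.mulLeft_apply, hφ, hD]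
  let h : B →ₐ[R] C := AlgHom.ofLinearMap (g + φlin)
    (by simp only [LinearMap.add_apply, hφlin]; exact hone)
    (by intro x y
        simp only [LinearMap.add_apply, hφlin]
        exact hmul x y)
  refine ⟨h, ?_⟩
  ext x
  show Ideal.Quotient.mk I (g x + φlin x) = f x
  rw [map_add, hφlin, hg, Ideal.Quotient.eq_zero_iff_mem.mpr (hφI x), add_zero]

end

/-- Let `R` be a commutative ring and `B` a commutative `R`-algebra that is
free of rank `d` as an `R`-module with `R`-module basis `b`. Then `B` is an étale `R`-algebra
(formally étale and of finite presentation over `R`) if and only if the discriminant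
`disc_R(b) = det (Tr_{B/R} (bᵢ bⱼ))` is a unit of `R`. -/
theorem etale_iff_isUnit_discr (d : ℕ) (R B : Type) [CommRing R] [CommRing B]
    [Algebra R B] (b : Module.Basis (Fin d) R B) :
    Algebra.Etale R B ↔ IsUnit (Algebra.discr R (⇑b)) := by
  constructor
  · intro h
    have : Module.Finite R B := Module.Finite.of_basis b
    have : Algebra.FiniteType R B := inferInstance
    obtain ⟨t, ht1, ht2⟩ := (Algebra.FormallyUnramified.iff_exists_tensorProduct).mp
      (Algebra.FormallyEtale.iff_formallyUnramified_and_formallySmooth.mp h.formallyEtale).1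
    exact isUnit_discr_of_sep b t ht1 ht2
  · intro hu
    have hFP : Algebra.FinitePresentation R B := finitePresentation_of_basis b
    have hFU : Algebra.FormallyUnramified R B := formallyUnramified_of_isUnit_discr b hu
    have hFS : Algebra.FormallySmooth R B :=
      formallySmooth_of_sep b (tdual b) (sum_mul_tdual_eq_one b hu) (sep_swap b hu)
    have hFE : Algebra.FormallyEtale R B := Algebra.FormallyEtale.of_formallyUnramified_and_formallySmooth
    exact { formallyEtale := hFE, finitePresentation := hFP }
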